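/- arXiv:1205.3416 — 3 statements merged into one kernel-verified Lean document; each statement's English description precedes it below -/
import Mathlib

section
/- For any G-module V and any integer k ≥ 1, β_k(G,V) ≤ β_k(F[V], F[V]^G) + 1. -/
open scoped ENNReal


open MvPolynomial

/-- The (right) action of a group element `g` on the coordinate ring `F[V]` of `V = ι → F`,
determined by `(f^g)(v) = f (g • v)` where `g` acts on `V` through the representation `ρ`. -/
noncomputable def polyAct {F : Type*} [Field F] {G : Type*} [Group G] {ι : Type*}
    [Fintype ι] [DecidableEq ι] (ρ : Representation F G (ι → F)) (g : G) :
    MvPolynomial ι F →ₐ[F] MvPolynomial ι F :=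
  MvPolynomial.aeval (fun i => ∑ j, (ρ g (Pi.single j 1) i) • MvPolynomial.X j)

/-- The ring of polynomial invariants `F[V]^G`. -/
noncomputable def invRing {F : Type*} [Field F] {G : Type*} [Group G] {ι : Type*}
    [Fintype ι] [DecidableEq ι] (ρ : Representation F G (ι → F)) :
    Subalgebra F (MvPolynomial ι F) :=
  ⨅ g : G, AlgHom.equalizer (polyAct ρ g) (AlgHom.id F (MvPolynomial ι F))

/-- The degree `d` homogeneous component of a graded subalgebra `S` of the polynomial ring,
as a subspace of the polynomial ring. -/
noncomputable def subComp {F : Type*} [Field F] {ι : Type*} (S : Subalgebra F (MvPolynomial ι F)) (d : ℕ) :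
    Submodule F (MvPolynomial ι F) :=
  Subalgebra.toSubmodule S ⊓ homogeneousSubmodule ι F d

/-- `S_+`, the span of the homogeneous elements of positive degree of `S`. -/
noncomputable def subPos {F : Type*} [Field F] {ι : Type*} (S : Subalgebra F (MvPolynomial ι F)) :
    Submodule F (MvPolynomial ι F) :=
  ⨆ d ∈ Set.Ioi (0 : ℕ), subComp S d

/-- `β_k(S)`, the top degree of `S_+ / S_+^{k+1}`, i.e. the supremum (in `ℕ∞`) of the degrees `d`
such that the degree `d` component of `S_+` is not contained in `S_+^{k+1}`. -/
noncomputable def betaAlg {F : Type*} [Field F] {ι : Type*}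
    (S : Subalgebra F (MvPolynomial ι F)) (k : ℕ) : ℕ∞ :=
  sSup ((fun d : ℕ => (d : ℕ∞)) '' {d | 0 < d ∧ ¬ subComp S d ≤ subPos S ^ (k + 1)})

/-- `β_k(F[V], S)`, the top degree of `F[V]/S_+^k F[V]`, i.e. the supremum (in `ℕ∞`) of the
degrees `d` such that the degree `d` component of the polynomial ring is not contained in
`S_+^k ⬝ F[V]`. -/
noncomputable def betaMod {F : Type*} [Field F] {ι : Type*}
    (S : Subalgebra F (MvPolynomial ι F)) (k : ℕ) : ℕ∞ :=
  sSup ((fun d : ℕ => (d : ℕ∞)) ''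
    {d | ¬ homogeneousSubmodule ι F d ≤ subPos S ^ k * (⊤ : Submodule F (MvPolynomial ι F))})

/-- `β_k(G)`, the supremum over all finite dimensional `G`-modules `V` of `β_k(F[V]^G)`. -/
noncomputable def betaGrp (F : Type*) [Field F] (G : Type*) [Group G] (k : ℕ) : ℕ∞ :=
  ⨆ (n : ℕ) (ρ : Representation F G (Fin n → F)), betaAlg (invRing ρ) k

/-- `S` is a finitely generated module over its subalgebra `T`. -/
noncomputable def fgOver {F : Type*} [Field F] {ι : Type*} (S T : Subalgebra F (MvPolynomial ι F)) : Prop :=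
  ∃ B : Finset (MvPolynomial ι F), (B : Set (MvPolynomial ι F)) ⊆ S ∧
    Subalgebra.toSubmodule S ≤ Subalgebra.toSubmodule T * Submodule.span F (B : Set (MvPolynomial ι F))

/-- `σ(S)`: the minimal `d` such that `S` is a finitely generated module over the subalgebra
`F[S_{≤ d}]` generated by the homogeneous elements of `S` of degree at most `d`. -/
noncomputable def sigmaAlg {F : Type*} [Field F] {ι : Type*}
    (S : Subalgebra F (MvPolynomial ι F)) : ℕ :=
  sInf {d : ℕ | fgOver S (Algebra.adjoin F (⋃ i ∈ Set.Iic d, (subComp S i : Set (MvPolynomial ι F))))}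

/-- `σ(G)`, the supremum over all finite dimensional `G`-modules `V` of `σ(F[V]^G)`. -/
noncomputable def sigmaGrp (F : Type*) [Field F] (G : Type*) [Group G] : ℕ∞ :=
  ⨆ (n : ℕ) (ρ : Representation F G (Fin n → F)), (sigmaAlg (invRing ρ) : ℕ∞)

/-- An irreducible (simple, nonzero) representation. -/
def IsIrredRep {F : Type*} [Field F] {G : Type*} [Group G] {V : Type*}
    [AddCommGroup V] [Module F V] (π : Representation F G V) : Prop :=
  Nontrivial V ∧ ∀ W : Submodule F V, (∀ g : G, ∀ x ∈ W, π g x ∈ W) → W = ⊥ ∨ W = ⊤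

section AuxLemmas
variable {F : Type*} [Field F] {G : Type*} [Group G] {ι : Type*}
    [Fintype ι] [DecidableEq ι] (ρ : Representation F G (ι → F))
lemma polyAct_X (g : G) (i : ι) :
    polyAct ρ g (X i) = ∑ j, (ρ g (Pi.single j 1) i) • X j :=
  aeval_X _ i

lemma pi_single_decomp (v : ι → F) : v = ∑ j, v j • (Pi.single j (1 : F) : ι → F) := by
  conv_lhs => rw [← Finset.univ_sum_single v]
  refine Finset.sum_congr rfl fun j _ => ?_
  ext l
  by_cases h : j = l <;> simp [Pi.single_apply, h]

lemma rep_entry_comp (g g' : G) (i l : ι) :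
    ρ (g' * g) (Pi.single l 1) i
      = ∑ j, (ρ g' (Pi.single j 1) i) * (ρ g (Pi.single l 1) j) := by
  have h : ρ (g' * g) (Pi.single l 1) = ρ g' (ρ g (Pi.single l 1)) := by
    rw [map_mul]; rfl
  rw [h]
  conv_lhs => rw [pi_single_decomp (ρ g (Pi.single l 1))]
  rw [map_sum]
  simp only [map_smul]
  rw [Finset.sum_apply]
  refine Finset.sum_congr rfl fun j _ => ?_
  simp [smul_eq_mul, mul_comm]

lemma polyAct_polyAct (g g' : G) (f : MvPolynomial ι F) :
    polyAct ρ g (polyAct ρ g' f) = polyAct ρ (g' * g) f := by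
  have h : (polyAct ρ g).comp (polyAct ρ g') = polyAct ρ (g' * g) := by
    apply algHom_ext
    intro i
    simp only [AlgHom.comp_apply, polyAct_X, map_sum, map_smul, Finset.smul_sum, smul_smul]
    rw [Finset.sum_comm]
    refine Finset.sum_congr rfl fun l _ => ?_
    rw [← Finset.sum_smul, ← rep_entry_comp ρ g g' i l]
  calc polyAct ρ g (polyAct ρ g' f) = ((polyAct ρ g).comp (polyAct ρ g')) f := rfl
    _ = _ := by rw [h]

lemma polyAct_one (f : MvPolynomial ι F) : polyAct ρ 1 f = f := by
  have h : polyAct ρ 1 = AlgHom.id F (MvPolynomial ι F) := by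
    apply algHom_ext
    intro i
    simp only [polyAct_X, map_one, AlgHom.id_apply]
    rw [Finset.sum_eq_single i]
    · simp
    · intro j _ hj
      simp [Pi.single_apply, hj]
    · simp
  rw [h]; rfl

lemma polyAct_homog (g : G) {d : ℕ} {f : MvPolynomial ι F}
    (hf : f ∈ homogeneousSubmodule ι F d) :
    polyAct ρ g f ∈ homogeneousSubmodule ι F d := by
  rw [mem_homogeneousSubmodule] at hf ⊢
  have h1 : ∀ i : ι, ((fun i => ∑ j, (ρ g (Pi.single j 1) i) • MvPolynomial.X j) i : MvPolynomial ι F).IsHomogeneous 1 := by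
    intro i
    rw [← mem_homogeneousSubmodule]
    exact Submodule.sum_mem _ fun j _ => Submodule.smul_mem _ _
      (by rw [mem_homogeneousSubmodule]; exact isHomogeneous_X F j)
  have := MvPolynomial.IsHomogeneous.aeval (S := F) hf _ h1
  simpa [polyAct] using this

lemma homogeneousComponent_polyAct (g : G) (e : ℕ) (f : MvPolynomial ι F) :
    homogeneousComponent e (polyAct ρ g f) = polyAct ρ g (homogeneousComponent e f) := by
  conv_lhs => rw [← sum_homogeneousComponent f]
  rw [map_sum, map_sum]
  have hterm : ∀ x ∈ Finset.range (f.totalDegree + 1),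
      homogeneousComponent e (polyAct ρ g (homogeneousComponent x f))
        = if e = x then polyAct ρ g (homogeneousComponent x f) else 0 := by
    intro x _
    exact homogeneousComponent_of_mem (polyAct_homog ρ g (homogeneousComponent_mem x f))
  rw [Finset.sum_congr rfl hterm, Finset.sum_ite_eq]
  split_ifs with h
  · rfl
  · rw [Finset.mem_range, not_lt] at h
    rw [homogeneousComponent_eq_zero _ f (lt_of_lt_of_le (Nat.lt_succ_self _) h)]
    simp

lemma constantCoeff_polyAct (g : G) (f : MvPolynomial ι F) :
    constantCoeff (polyAct ρ g f) = constantCoeff f := by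
  have h := homogeneousComponent_polyAct ρ g 0 f
  rw [homogeneousComponent_zero, homogeneousComponent_zero] at h
  have h2 : (polyAct ρ g) (C (coeff 0 f)) = C (coeff 0 f) := by
    have := (polyAct ρ g).commutes (coeff 0 f)
    simpa [algebraMap_eq] using this
  rw [h2] at h
  have := congrArg constantCoeff h
  simp only [constantCoeff_C] at this; exact this

lemma mem_invRing_iff {f : MvPolynomial ι F} :
    f ∈ invRing ρ ↔ ∀ g : G, polyAct ρ g f = f := by
  simp [invRing, Algebra.mem_iInf, AlgHom.mem_equalizer]

-- Reynolds operator
variable [Fintype G]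

noncomputable def reynolds : MvPolynomial ι F →ₗ[F] MvPolynomial ι F :=
  (Fintype.card G : F)⁻¹ • ∑ g : G, (polyAct ρ g).toLinearMap

lemma reynolds_apply (f : MvPolynomial ι F) :
    reynolds ρ f = (Fintype.card G : F)⁻¹ • ∑ g : G, polyAct ρ g f := by
  simp [reynolds, LinearMap.sum_apply]

lemma reynolds_of_mem (hG : (Fintype.card G : F) ≠ 0) {f : MvPolynomial ι F}
    (hf : f ∈ invRing ρ) : reynolds ρ f = f := by
  rw [reynolds_apply]
  rw [mem_invRing_iff] at hf
  rw [Finset.sum_congr rfl fun g _ => hf g, Finset.sum_const, Finset.card_univ,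
    ← Nat.cast_smul_eq_nsmul F, smul_smul, inv_mul_cancel₀ hG, one_smul]

lemma reynolds_mem_invRing (f : MvPolynomial ι F) : reynolds ρ f ∈ invRing ρ := by
  rw [mem_invRing_iff]
  intro h
  have key : ∑ g : G, polyAct ρ h (polyAct ρ g f) = ∑ g : G, polyAct ρ g f := by
    rw [Finset.sum_congr rfl fun g (_ : g ∈ Finset.univ) => polyAct_polyAct ρ h g f]
    exact Fintype.sum_equiv (Equiv.mulRight h) _ _ fun g => rfl
  rw [reynolds_apply, map_smul, map_sum, key]

lemma reynolds_mul_left {a : MvPolynomial ι F} (ha : a ∈ invRing ρ) (m : MvPolynomial ι F) :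
    reynolds ρ (a * m) = a * reynolds ρ m := by
  rw [mem_invRing_iff] at ha
  rw [reynolds_apply, reynolds_apply]
  rw [Finset.sum_congr rfl fun g _ => by rw [map_mul, ha g]]
  rw [← Finset.mul_sum, mul_smul_comm]

lemma constantCoeff_reynolds {m : MvPolynomial ι F} (hm : constantCoeff m = 0) :
    constantCoeff (reynolds ρ m) = 0 := by
  rw [reynolds_apply, smul_eq_C_mul, map_mul, map_sum, constantCoeff_C,
    Finset.sum_congr rfl fun g (_ : g ∈ Finset.univ) => (constantCoeff_polyAct ρ g m).trans hm]
  simp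

lemma mem_subPos_of_invariant {f : MvPolynomial ι F} (hf : f ∈ invRing ρ)
    (h0 : constantCoeff f = 0) : f ∈ subPos (invRing ρ) := by
  rw [← sum_homogeneousComponent f]
  apply Submodule.sum_mem
  intro i _
  rcases Nat.eq_zero_or_pos i with hi | hi
  · subst hi
    rw [homogeneousComponent_zero]
    have : coeff 0 f = 0 := h0
    rw [this, map_zero]
    exact Submodule.zero_mem _
  · have hmem : homogeneousComponent i f ∈ subComp (invRing ρ) i := by
      constructor
      · show homogeneousComponent i f ∈ invRing ρ
        rw [mem_invRing_iff]
        intro g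
        rw [← homogeneousComponent_polyAct, (mem_invRing_iff ρ).mp hf g]
      · exact homogeneousComponent_mem i f
    exact le_iSup₂ (f := fun d (_ : d ∈ Set.Ioi (0:ℕ)) => subComp (invRing ρ) d) i hi hmem

lemma subPos_le_toSubmodule (S : Subalgebra F (MvPolynomial ι F)) :
    subPos S ≤ Subalgebra.toSubmodule S :=
  iSup₂_le fun _ _ => inf_le_left

lemma subPos_pow_le_toSubmodule (S : Subalgebra F (MvPolynomial ι F)) (k : ℕ) :
    subPos S ^ (k + 1) ≤ Subalgebra.toSubmodule S := by
  induction k with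
  | zero => simpa using subPos_le_toSubmodule S
  | succ k ih =>
      rw [pow_succ]
      refine le_trans (mul_le_mul' ih (subPos_le_toSubmodule S)) ?_
      rw [Submodule.mul_le]
      exact fun a ha b hb => S.mul_mem ha hb

end AuxLemmas


noncomputable def constKer (F : Type*) [Field F] (ι : Type*) :
    Submodule F (MvPolynomial ι F) where
  carrier := {f | constantCoeff f = 0}
  add_mem' := by intro a b ha hb; simp only [Set.mem_setOf_eq, map_add] at *; rw [ha, hb, add_zero]
  zero_mem' := map_zero _
  smul_mem' := by
    intro c x hx
    simp only [Set.mem_setOf_eq] at *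
    rw [smul_eq_C_mul, map_mul, constantCoeff_C, hx, mul_zero]

lemma mem_constKer {F : Type*} [Field F] {ι : Type*} {f : MvPolynomial ι F} :
    f ∈ constKer F ι ↔ constantCoeff f = 0 := Iff.rfl

lemma degree_single_one {ι : Type*} (i : ι) : (Finsupp.single i 1).degree = 1 := by
  exact Finsupp.degree_single i 1

lemma homSub_succ_le {F : Type*} [Field F] {ι : Type*} (e : ℕ) :
    homogeneousSubmodule ι F (e + 1) ≤
      homogeneousSubmodule ι F 1 * homogeneousSubmodule ι F e := by
  intro p hp
  rw [mem_homogeneousSubmodule] at hp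
  rw [as_sum p]
  apply Submodule.sum_mem
  intro s hs
  have hdeg : s.degree = e + 1 := by
    rw [Finsupp.degree_eq_weight_one]
    exact hp (mem_support_iff.mp hs)
  have hs0 : s ≠ 0 := by
    intro h; rw [h] at hdeg; simp at hdeg
  obtain ⟨i, hi⟩ := DFunLike.ne_iff.mp hs0
  simp only [Finsupp.coe_zero, Pi.zero_apply] at hi
  have hle : Finsupp.single i 1 ≤ s := Finsupp.single_le_iff.mpr (Nat.one_le_iff_ne_zero.mpr hi)
  have hsum : Finsupp.single i 1 + (s - Finsupp.single i 1) = s := add_tsub_cancel_of_le hle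
  have hdeg' : (s - Finsupp.single i 1).degree = e := by
    have := congrArg Finsupp.degree hsum
    rw [Finsupp.degree_eq_weight_one] at this ⊢
    rw [map_add] at this
    have h1 : (Finsupp.weight fun _ => 1) (Finsupp.single i 1) = 1 := by
      rw [← Finsupp.degree_eq_weight_one]; exact degree_single_one i
    rw [h1, ← Finsupp.degree_eq_weight_one, hdeg] at this
    rw [← Finsupp.degree_eq_weight_one]
    omega
  have hmono : (monomial s) (coeff s p) =
      X i * (monomial (s - Finsupp.single i 1)) (coeff s p) := by
    conv_lhs => rw [← hsum, monomial_single_add, pow_one, hsum]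
  rw [hmono]
  exact Submodule.mul_mem_mul
    ((mem_homogeneousSubmodule _ _).mpr (isHomogeneous_X F i))
    ((mem_homogeneousSubmodule _ _).mpr (isHomogeneous_monomial _ hdeg'))

lemma homSub_one_mul_top_le {F : Type*} [Field F] {ι : Type*} :
    homogeneousSubmodule ι F 1 * (⊤ : Submodule F (MvPolynomial ι F)) ≤ constKer F ι := by
  rw [Submodule.mul_le]
  intro m hm n _
  rw [mem_constKer, map_mul]
  have : constantCoeff m = 0 := by
    rw [mem_homogeneousSubmodule] at hm
    exact hm.coeff_eq_zero (by simp)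
  rw [this, zero_mul]

lemma subComp_le_pow {F : Type*} [Field F] {G : Type*} [Group G] {ι : Type*}
    [Fintype ι] [DecidableEq ι] [Fintype G] (ρ : Representation F G (ι → F))
    (hG : (Fintype.card G : F) ≠ 0) {k d e : ℕ} (hk : 1 ≤ k) (hd : d = e + 1)
    (hmod : homogeneousSubmodule ι F e ≤
      subPos (invRing ρ) ^ k * (⊤ : Submodule F (MvPolynomial ι F))) :
    subComp (invRing ρ) d ≤ subPos (invRing ρ) ^ (k + 1) := by
  intro f hf
  simp only [subComp, Submodule.mem_inf] at hf
  obtain ⟨hfS, hfhom⟩ := hf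
  have h1 : f ∈ subPos (invRing ρ) ^ k * constKer F ι := by
    have step1 : f ∈ homogeneousSubmodule ι F 1 * homogeneousSubmodule ι F e := by
      apply homSub_succ_le e
      rw [← hd]; exact hfhom
    have step2 : homogeneousSubmodule ι F 1 * homogeneousSubmodule ι F e
        ≤ subPos (invRing ρ) ^ k * constKer F ι := by
      calc homogeneousSubmodule ι F 1 * homogeneousSubmodule ι F e
          ≤ homogeneousSubmodule ι F 1 * (subPos (invRing ρ) ^ k * ⊤) :=
            mul_le_mul_right hmod _
        _ = subPos (invRing ρ) ^ k * (homogeneousSubmodule ι F 1 * ⊤) := mul_left_comm _ _ _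
        _ ≤ subPos (invRing ρ) ^ k * constKer F ι :=
            mul_le_mul_right homSub_one_mul_top_le _
    exact step2 step1
  have h2 : reynolds ρ f ∈ subPos (invRing ρ) ^ (k + 1) := by
    refine Submodule.mul_induction_on h1 ?_ ?_
    · intro a ha m hm
      have haS : a ∈ invRing ρ := by
        have h3 := subPos_pow_le_toSubmodule (invRing ρ) (k - 1)
        rw [Nat.sub_add_cancel hk] at h3
        exact h3 ha
      rw [reynolds_mul_left ρ haS]
      have hrm : reynolds ρ m ∈ subPos (invRing ρ) :=
        mem_subPos_of_invariant ρ (reynolds_mem_invRing ρ m) (constantCoeff_reynolds ρ hm)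
      rw [pow_succ]
      exact Submodule.mul_mem_mul ha hrm
    · intro x y hx hy
      rw [map_add]
      exact add_mem hx hy
  rwa [reynolds_of_mem ρ hG hfS] at h2


/-- For any `G`-module `V` and any `k ≥ 1`, `β_k(G,V) ≤ β_k(F[V], F[V]^G) + 1`. -/
theorem betaAlg_le_betaMod_add_one {F : Type*} [Field F] {G : Type*} [Group G] [Finite G]
    (hG : (Nat.card G : F) ≠ 0) (n : ℕ) (ρ : Representation F G (Fin n → F))
    (k : ℕ) (hk : 1 ≤ k) :
    betaAlg (invRing ρ) k ≤ betaMod (invRing ρ) k + 1 := by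
  cases nonempty_fintype G
  rw [Nat.card_eq_fintype_card] at hG
  apply sSup_le
  rintro x ⟨d, ⟨hd0, hnle⟩, rfl⟩
  by_contra hgt
  push_neg at hgt
  have hne : betaMod (invRing ρ) k ≠ ⊤ := by
    intro h; rw [h] at hgt; simp at hgt
  obtain ⟨b, hb0⟩ := WithTop.ne_top_iff_exists.mp hne
  have hb : ((b : ℕ) : ℕ∞) = betaMod (invRing ρ) k := by exact_mod_cast hb0
  rw [← hb] at hgt
  have hdb : b + 1 < d := by exact_mod_cast hgt
  have hmod : homogeneousSubmodule (Fin n) F (d - 1) ≤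
      subPos (invRing ρ) ^ k * (⊤ : Submodule F (MvPolynomial (Fin n) F)) := by
    by_contra hcon
    have hle : ((d - 1 : ℕ) : ℕ∞) ≤ betaMod (invRing ρ) k :=
      le_sSup ⟨d - 1, hcon, rfl⟩
    rw [← hb] at hle
    have : d - 1 ≤ b := by exact_mod_cast hle
    omega
  exact absurd (subComp_le_pow ρ hG hk (by omega : d = (d - 1) + 1) hmod) hnle
end

section
/- Let R be a commutative graded F-algebra with R_0 = F. For any positive integers r ≤ k, β_k(R) ≤ (k/r)·β_r(R); equivalently, r·β_k(R) ≤ k·β_r(R). -/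
open scoped ENNReal Pointwise


/-- `R_+`, the span of the homogeneous elements of positive degree. -/
noncomputable def gradePos {F R : Type*} [Field F] [CommRing R] [Algebra F R]
    (𝒜 : ℕ → Submodule F R) : Submodule F R :=
  ⨆ d ∈ Set.Ioi (0 : ℕ), 𝒜 d

/-- `β_k(R)`, the top degree of `R_+/R_+^{k+1}`:  the supremum (in `ℕ∞`) of the degrees `d`
such that the degree `d` component of `R_+` is not contained in `R_+^{k+1}`. -/
noncomputable def gBeta {F R : Type*} [Field F] [CommRing R] [Algebra F R]
    (𝒜 : ℕ → Submodule F R) (k : ℕ) : ℕ∞ :=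
  sSup ((fun d : ℕ => (d : ℕ∞)) '' {d | 0 < d ∧ ¬ 𝒜 d ≤ gradePos 𝒜 ^ (k + 1)})

/-- `F[R_{≤ d}]`, the subalgebra of `R` generated by the homogeneous elements
of degree at most `d`. -/
noncomputable def gBelow {F R : Type*} [Field F] [CommRing R] [Algebra F R]
    (𝒜 : ℕ → Submodule F R) (d : ℕ) : Subalgebra F R :=
  Algebra.adjoin F (⋃ i ∈ Set.Iic d, (𝒜 i : Set R))

/-- `σ(R)`, the minimal `d` such that `R` is a finitely generated module over `F[R_{≤ d}]`. -/
noncomputable def gSigma {F R : Type*} [Field F] [CommRing R] [Algebra F R]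
    (𝒜 : ℕ → Submodule F R) : ℕ :=
  sInf {d : ℕ | Module.Finite (gBelow 𝒜 d) R}

/-- `η(R) = β(R_+, F[R_{≤ σ(R)}])`, the top degree of `R_+` modulo `(F[R_{≤ σ(R)}])_+ ⬝ R_+`. -/
noncomputable def gEta {F R : Type*} [Field F] [CommRing R] [Algebra F R]
    (𝒜 : ℕ → Submodule F R) : ℕ∞ :=
  sSup ((fun d : ℕ => (d : ℕ∞)) '' {d | 0 < d ∧
    ¬ 𝒜 d ≤ (Subalgebra.toSubmodule (gBelow 𝒜 (gSigma 𝒜)) ⊓ gradePos 𝒜) * gradePos 𝒜})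


section aux
variable {F R : Type*} [Field F] [CommRing R] [Algebra F R] (𝒜 : ℕ → Submodule F R)

lemma gradePos_eq_span :
    gradePos 𝒜 = Submodule.span F (⋃ d ∈ Set.Ioi (0:ℕ), ((𝒜 d : Set R))) := by
  simp [gradePos, Submodule.span_iUnion₂, Submodule.span_eq]

lemma grade_le_gradePos {d : ℕ} (hd : 0 < d) : 𝒜 d ≤ gradePos 𝒜 :=
  le_iSup₂ (f := fun d (_ : d ∈ Set.Ioi (0:ℕ)) => 𝒜 d) d hd

variable [GradedAlgebra 𝒜]

lemma gKey (r b : ℕ) (hr : 1 ≤ r)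
    (hb : ∀ d, b < d → 𝒜 d ≤ gradePos 𝒜 ^ (r + 1)) :
    ∀ k, r ≤ k → ∀ d, k * b < r * d → 𝒜 d ≤ gradePos 𝒜 ^ (k + 1) := by
  intro k hk
  induction k, hk using Nat.le_induction with
  | base =>
    intro d hd
    exact hb d (lt_of_mul_lt_mul_left hd (Nat.zero_le r))
  | succ k hk IH =>
    intro d hd
    have hkb : k * b < r * d := lt_of_le_of_lt (Nat.mul_le_mul_right b k.le_succ) hd
    have h1 : 𝒜 d ≤ gradePos 𝒜 ^ (k + 1) := IH d hkb
    set U : Set R := ⋃ e ∈ Set.Ioi (0:ℕ), ((𝒜 e : Set R)) with hU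
    intro x hx
    have hxp : x ∈ Submodule.span F (U ^ (k + 1)) := by
      have := h1 hx
      rwa [gradePos_eq_span, Submodule.span_pow] at this
    let π : R →ₗ[F] R := (𝒜 d).subtype ∘ₗ (DirectSum.component F ℕ (fun i => 𝒜 i) d)
      ∘ₗ (DirectSum.decomposeLinearEquiv 𝒜).toLinearMap
    have hπ : ∀ y : R, π y = ((DirectSum.decompose 𝒜 y) d : R) := fun y => rfl
    have hπx : π x = x := by
      rw [hπ, DirectSum.decompose_of_mem_same 𝒜 hx]
    have hximg : x ∈ Submodule.map π (Submodule.span F (U ^ (k + 1))) :=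
      ⟨x, hxp, hπx⟩
    rw [Submodule.map_span] at hximg
    refine Submodule.span_le.mpr ?_ hximg
    rintro _ ⟨t, ht, rfl⟩
    rw [Set.mem_pow] at ht
    obtain ⟨f, hf⟩ := ht
    have hfi : ∀ i : Fin (k+1), ∃ e : ℕ, 0 < e ∧ (f i : R) ∈ 𝒜 e := by
      intro i
      have h2 := (f i).2
      simp only [hU, Set.mem_iUnion, Set.mem_Ioi, SetLike.mem_coe] at h2
      obtain ⟨e, he, hmem⟩ := h2
      exact ⟨e, he, hmem⟩
    choose e he0 hemem using hfi
    have ht𝒜 : t ∈ 𝒜 (∑ i, e i) := by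
      rw [← hf, List.prod_ofFn]
      exact SetLike.prod_mem_graded 𝒜 e (fun i => (f i : R)) (fun i _ => hemem i)
    rcases eq_or_ne (∑ i, e i) d with hsum | hsum
    · -- π t = t, and t decomposes with a small factor
      have hπt : π t = t := by rw [hπ, DirectSum.decompose_of_mem_same 𝒜 (hsum ▸ ht𝒜)]
      rw [SetLike.mem_coe, hπt]
      -- find a small factor
      have hex : ∃ i₀ : Fin (k+1), (k+1) * e i₀ ≤ d := by
        by_contra hcon
        push_neg at hcon
        have hlt : ∑ _i : Fin (k+1), d < ∑ i : Fin (k+1), (k+1) * e i :=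
          Finset.sum_lt_sum_of_nonempty (by simp) (fun i _ => hcon i)
        rw [Finset.sum_const, ← Finset.mul_sum, hsum] at hlt
        simp at hlt
      obtain ⟨i₀, hi₀⟩ := hex
      have hsplit : e i₀ + ∑ i ∈ Finset.univ.erase i₀, e i = d := by
        rw [Finset.add_sum_erase _ _ (Finset.mem_univ i₀)]
        exact hsum
      set d₂ := ∑ i ∈ Finset.univ.erase i₀, e i with hd₂
      have harith : k * b < r * d₂ := by
        have h2 : (k+1) * e i₀ ≤ e i₀ + d₂ := by rw [hsplit]; exact hi₀
        rcases Nat.lt_or_ge (k * b) (r * d₂) with h | h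
        · exact h
        exfalso
        rw [← hsplit] at hd
        nlinarith [hd, h2, hr, hk]
      have hrest : (∏ i ∈ Finset.univ.erase i₀, (f i : R)) ∈ gradePos 𝒜 ^ (k + 1) := by
        apply IH d₂ harith
        exact SetLike.prod_mem_graded 𝒜 e (fun i => (f i : R)) (fun i _ => hemem i)
      have hfst : (f i₀ : R) ∈ gradePos 𝒜 := grade_le_gradePos 𝒜 (he0 i₀) (hemem i₀)
      have hprod : t = (f i₀ : R) * ∏ i ∈ Finset.univ.erase i₀, (f i : R) := by
        rw [← hf, List.prod_ofFn]
        exact (Finset.mul_prod_erase _ _ (Finset.mem_univ i₀)).symm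
      rw [hprod, pow_succ']
      exact Submodule.mul_mem_mul hfst hrest
    · have hπt : π t = 0 := by
        rw [hπ]
        rw [DirectSum.decompose_of_mem_ne 𝒜 ht𝒜 hsum]
      rw [SetLike.mem_coe, hπt]
      exact zero_mem _

end aux


/-- For positive integers `r ≤ k`, `β_k(R) ≤ (k/r)·β_r(R)`, i.e. `r·β_k(R) ≤ k·β_r(R)`. -/
theorem gBeta_mul_le {F R : Type*} [Field F] [CommRing R] [Algebra F R]
    (𝒜 : ℕ → Submodule F R) [GradedAlgebra 𝒜] (h0 : 𝒜 0 = 1)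
    (r k : ℕ) (hr : 1 ≤ r) (hrk : r ≤ k) :
    (r : ℕ∞) * gBeta 𝒜 k ≤ (k : ℕ∞) * gBeta 𝒜 r := by
  rcases eq_or_ne (gBeta 𝒜 r) ⊤ with hT | hT
  · rw [hT, ENat.mul_top (by exact_mod_cast (by omega : k ≠ 0))]
    exact le_top
  obtain ⟨b, hbeq⟩ := WithTop.ne_top_iff_exists.mp hT
  have hb : ∀ d, b < d → 𝒜 d ≤ gradePos 𝒜 ^ (r + 1) := by
    intro d hbd
    by_contra hcon
    have hle : (d : ℕ∞) ≤ gBeta 𝒜 r :=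
      le_sSup ⟨d, ⟨by omega, hcon⟩, rfl⟩
    rw [← hbeq] at hle
    exact absurd (Nat.cast_le.mp hle) (by omega)
  have hkey := gKey 𝒜 r b hr hb k hrk
  set D : Set ℕ := {d | 0 < d ∧ ¬ 𝒜 d ≤ gradePos 𝒜 ^ (k + 1)} with hDdef
  have hD : ∀ d ∈ D, r * d ≤ k * b := by
    intro d hd
    by_contra hcon
    exact hd.2 (hkey d (by omega))
  have hgBk : gBeta 𝒜 k = sSup ((fun d : ℕ => (d : ℕ∞)) '' D) := rfl
  rcases Set.eq_empty_or_nonempty D with hE | hNE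
  · rw [hgBk, hE]
    simp
  · have hDfin : D.Finite := by
      apply (Set.finite_Iic (k * b)).subset
      intro d hd
      have h1 : r * d ≤ k * b := hD d hd
      have h2 : d ≤ r * d := Nat.le_mul_of_pos_left d (by omega)
      exact Set.mem_Iic.mpr (by omega)
    have hmem : sSup ((fun d : ℕ => (d : ℕ∞)) '' D) ∈ (fun d : ℕ => (d : ℕ∞)) '' D :=
      Set.Nonempty.csSup_mem (hNE.image _) (hDfin.image _)
    obtain ⟨d, hdD, hdcast⟩ := hmem
    rw [hgBk, ← hdcast]
    rw [← hbeq]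
    have h3 : ((r * d : ℕ) : ℕ∞) ≤ ((k * b : ℕ) : ℕ∞) := Nat.cast_le.mpr (hD d hdD)
    push_cast at h3
    exact h3
end

section
/- Let H be a subgroup of the finite group G and V a G-module. Then σ(H,V) ≤ σ(G,V) ≤ [G:H] · σ(H,V), where V is regarded as an H-module by restriction. -/
open scoped ENNReal


open MvPolynomial

section SigmaAux

open Polynomial in
example : True := trivial

namespace SigmaAux
set_option linter.unusedSectionVars false
set_option maxHeartbeats 1000000
open scoped Pointwise

open Submodule

variable {F : Type*} [Field F] {G : Type*} [Group G] {ι : Type*}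
    [Fintype ι] [DecidableEq ι]

/-- `F[S_{≤d}]`. -/
noncomputable def adjC {F : Type*} [Field F] {ι : Type*}
    (S : Subalgebra F (MvPolynomial ι F)) (d : ℕ) : Subalgebra F (MvPolynomial ι F) :=
  Algebra.adjoin F (⋃ i ∈ Set.Iic d, (subComp S i : Set (MvPolynomial ι F)))

theorem sigmaAlg_eq (S : Subalgebra F (MvPolynomial ι F)) :
    sigmaAlg S = sInf {d : ℕ | fgOver S (adjC S d)} := rfl

theorem polyAct_X (ρ : Representation F G (ι → F)) (g : G) (i : ι) :
    polyAct ρ g (X i) = ∑ j, (ρ g (Pi.single j 1) i) • X j :=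
  aeval_X _ i

theorem polyAct_one (ρ : Representation F G (ι → F)) (p : MvPolynomial ι F) :
    polyAct ρ 1 p = p := by
  have : polyAct ρ 1 = AlgHom.id F (MvPolynomial ι F) := by
    apply MvPolynomial.algHom_ext
    intro i
    rw [AlgHom.id_apply, polyAct_X]
    simp [Pi.single_apply, ite_smul]
  rw [this, AlgHom.id_apply]

theorem polyAct_polyAct (ρ : Representation F G (ι → F)) (g g' : G) (p : MvPolynomial ι F) :
    polyAct ρ g' (polyAct ρ g p) = polyAct ρ (g * g') p := by
  have : (polyAct ρ g').comp (polyAct ρ g) = polyAct ρ (g * g') := by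
    apply MvPolynomial.algHom_ext
    intro i
    rw [AlgHom.comp_apply, polyAct_X, map_sum, polyAct_X]
    simp_rw [map_smul, polyAct_X, Finset.smul_sum, smul_smul]
    rw [Finset.sum_comm]
    refine Finset.sum_congr rfl fun k _ => ?_
    rw [← Finset.sum_smul]
    congr 1
    have h1 : ρ (g * g') (Pi.single k 1) = ρ g (ρ g' (Pi.single k 1)) := by
      rw [map_mul]; rfl
    rw [h1]
    have h2 : ∀ j : ι, (fun j' => if j = j' then (1:F) else 0) = Pi.single j 1 := by
      intro j; ext j'; simp [Pi.single_apply, eq_comm]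
    conv_rhs => rw [pi_eq_sum_univ (ρ g' (Pi.single k 1))]
    simp only [h2, map_sum, map_smul, Finset.sum_apply, Pi.smul_apply, smul_eq_mul]
    exact Finset.sum_congr rfl fun j _ => mul_comm _ _
  exact DFunLike.congr_fun this p

theorem mem_invRing {ρ : Representation F G (ι → F)} {p : MvPolynomial ι F} :
    p ∈ invRing ρ ↔ ∀ g, polyAct ρ g p = p := by
  simp [invRing, Algebra.mem_iInf, AlgHom.mem_equalizer]

theorem polyAct_isHomogeneous (ρ : Representation F G (ι → F)) (g : G)
    {p : MvPolynomial ι F} {n : ℕ} (h : p.IsHomogeneous n) :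
    (polyAct ρ g p).IsHomogeneous n := by
  have hg : ∀ i, ((∑ j, (ρ g (Pi.single j 1) i) • X j : MvPolynomial ι F)).IsHomogeneous 1 :=
    fun i => IsHomogeneous.sum _ _ _ fun j _ =>
      (homogeneousSubmodule ι F 1).smul_mem _ (isHomogeneous_X F j)
  have := h.aeval _ hg
  rw [one_mul] at this
  exact this

section Bridge

variable (T S' : Subalgebra F (MvPolynomial ι F))

omit [Fintype ι] [DecidableEq ι]

theorem mul_self_eq : Subalgebra.toSubmodule T * Subalgebra.toSubmodule T = Subalgebra.toSubmodule T := by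
  apply le_antisymm
  · rw [Submodule.mul_le]
    intro a ha b hb
    exact T.mul_mem ha hb
  · intro x hx
    have := Submodule.mul_mem_mul
      (show (1 : MvPolynomial ι F) ∈ Subalgebra.toSubmodule T from T.one_mem) hx
    rwa [one_mul] at this

theorem mul_mem_mul_left' {M : Submodule F (MvPolynomial ι F)} {t x : MvPolynomial ι F}
    (ht : t ∈ T) (hx : x ∈ Subalgebra.toSubmodule T * M) :
    t * x ∈ Subalgebra.toSubmodule T * M := by
  refine Submodule.mul_induction_on hx (fun a ha b hb => ?_) (fun a b ha hb => ?_)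
  · rw [← mul_assoc]
    exact Submodule.mul_mem_mul (T.mul_mem ht ha) hb
  · rw [mul_add]
    exact add_mem ha hb

theorem restrictScalars_span_eq (s : Set (MvPolynomial ι F)) :
    Submodule.restrictScalars F (Submodule.span ↥T s)
      = Subalgebra.toSubmodule T * Submodule.span F s := by
  apply le_antisymm
  · intro x hx
    have hx' : x ∈ Submodule.span ↥T s := hx
    clear hx
    induction hx' using Submodule.span_induction with
    | mem y hy =>
        have := Submodule.mul_mem_mul
          (show (1 : MvPolynomial ι F) ∈ Subalgebra.toSubmodule T from T.one_mem)
          (Submodule.subset_span (R := F) hy)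
        rwa [one_mul] at this
    | zero => exact zero_mem _
    | add a b _ _ h1 h2 => exact add_mem h1 h2
    | smul t y _ hy =>
        have hsmul : t • y = (t : MvPolynomial ι F) * y := by
          rw [Algebra.smul_def]; rfl
        rw [hsmul]
        exact mul_mem_mul_left' T t.2 hy
  · rw [Submodule.mul_le]
    intro t ht b hb
    have hb' : b ∈ Submodule.span ↥T s := by
      have hle : Submodule.span F s ≤ Submodule.restrictScalars F (Submodule.span ↥T s) :=
        Submodule.span_le.mpr fun x hx => Submodule.subset_span hx
      exact hle hb
    have := (Submodule.span ↥T s).smul_mem ⟨t, ht⟩ hb'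
    have hsmul : (⟨t, ht⟩ : ↥T) • b = t * b := by rw [Algebra.smul_def]; rfl
    rwa [hsmul] at this

theorem finite_to_span (hfin : Module.Finite ↥T (MvPolynomial ι F)) :
    ∃ B : Finset (MvPolynomial ι F),
      (⊤ : Submodule F (MvPolynomial ι F)) ≤ Subalgebra.toSubmodule T * Submodule.span F ↑B := by
  obtain ⟨B, hB⟩ := hfin.fg_top
  refine ⟨B, le_of_eq ?_⟩
  rw [← restrictScalars_span_eq, hB, Submodule.restrictScalars_top]

theorem span_to_finite {s : Set (MvPolynomial ι F)} (hs : s.Finite)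
    (h : (⊤ : Submodule F (MvPolynomial ι F)) ≤ Subalgebra.toSubmodule T * Submodule.span F s) :
    Module.Finite ↥T (MvPolynomial ι F) := by
  refine ⟨⟨hs.toFinset, ?_⟩⟩
  apply Submodule.restrictScalars_injective F ↥T (MvPolynomial ι F)
  rw [restrictScalars_span_eq, Submodule.restrictScalars_top, hs.coe_toFinset]
  exact le_antisymm le_top h

theorem finite_mono (h : T ≤ S') (hfin : Module.Finite ↥T (MvPolynomial ι F)) :
    Module.Finite ↥S' (MvPolynomial ι F) := by
  obtain ⟨B, hB⟩ := finite_to_span T hfin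
  refine span_to_finite S' (Finset.finite_toSet B) (hB.trans ?_)
  exact mul_le_mul' h le_rfl

theorem finite_compose {s : Set (MvPolynomial ι F)} (hs : s.Finite)
    (h1 : Subalgebra.toSubmodule S' ≤ Subalgebra.toSubmodule T * Submodule.span F s)
    (h2 : Module.Finite ↥S' (MvPolynomial ι F)) :
    Module.Finite ↥T (MvPolynomial ι F) := by
  obtain ⟨B, hB⟩ := finite_to_span S' h2
  have hsB : (s * (↑B : Set (MvPolynomial ι F))).Finite := hs.mul B.finite_toSet
  refine span_to_finite T hsB ?_
  refine hB.trans ?_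
  calc Subalgebra.toSubmodule S' * Submodule.span F ↑B
      ≤ (Subalgebra.toSubmodule T * Submodule.span F s) * Submodule.span F ↑B :=
        mul_le_mul' h1 le_rfl
    _ = Subalgebra.toSubmodule T * Submodule.span F (s * ↑B) := by
        rw [mul_assoc, Submodule.span_mul_span]

/-- The `T`-submodule structure on (the carrier of) a larger subalgebra `S'`. -/
noncomputable def subSub (h : T ≤ S') : Submodule ↥T (MvPolynomial ι F) where
  carrier := S'
  add_mem' := fun ha hb => S'.add_mem ha hb
  zero_mem' := S'.zero_mem
  smul_mem' := fun t x hx => by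
    have hsmul : t • x = (t : MvPolynomial ι F) * x := by rw [Algebra.smul_def]; rfl
    rw [hsmul]
    exact S'.mul_mem (h t.2) hx

theorem extract (hTS : T ≤ S') (hfgT : T.FG)
    (hfin : Module.Finite ↥T (MvPolynomial ι F)) : fgOver S' T := by
  haveI : IsNoetherianRing ↥T := isNoetherianRing_of_fg hfgT
  haveI := hfin
  haveI : IsNoetherian ↥T (MvPolynomial ι F) :=
    isNoetherian_of_isNoetherianRing_of_finite _ _
  obtain ⟨B', hB'⟩ := IsNoetherian.noetherian (subSub T S' hTS)
  refine ⟨B', ?_, ?_⟩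
  · intro b hb
    have : b ∈ Submodule.span ↥T (↑B' : Set (MvPolynomial ι F)) := Submodule.subset_span hb
    rw [hB'] at this
    exact this
  · have h1 : Submodule.restrictScalars F (subSub T S' hTS) = Subalgebra.toSubmodule S' := rfl
    rw [← h1, ← hB', restrictScalars_span_eq]

end Bridge


section IntegralHelpers

variable (A : Subalgebra F (MvPolynomial ι F))

theorem finite_of_X_integral
    (hX : ∀ i : ι, IsIntegral ↥A (X i : MvPolynomial ι F)) :
    Module.Finite ↥A (MvPolynomial ι F) := by
  have hadj : Algebra.adjoin ↥A (Set.range (X : ι → MvPolynomial ι F)) = ⊤ := by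
    rw [eq_top_iff]
    intro p _
    have hp : p ∈ Algebra.adjoin F (Set.range (X : ι → MvPolynomial ι F)) := by
      rw [MvPolynomial.adjoin_range_X]; trivial
    have hle : Algebra.adjoin F (Set.range (X : ι → MvPolynomial ι F))
        ≤ Subalgebra.restrictScalars F (Algebra.adjoin ↥A (Set.range (X : ι → MvPolynomial ι F))) :=
      Algebra.adjoin_le fun x hx => Algebra.subset_adjoin hx
    exact hle hp
  have hfg := fg_adjoin_of_finite (Set.finite_range (X : ι → MvPolynomial ι F))
    (fun x hx => by obtain ⟨i, rfl⟩ := hx; exact hX i)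
  rw [hadj] at hfg
  refine ⟨?_⟩
  rwa [Algebra.top_toSubmodule] at hfg

theorem adjoin_integral_le (B₀ : Finset (MvPolynomial ι F))
    (hint : ∀ b ∈ B₀, IsIntegral ↥A b) :
    ∃ B₄ : Finset (MvPolynomial ι F),
      Subalgebra.toSubmodule
          (Subalgebra.restrictScalars F (Algebra.adjoin ↥A (↑B₀ : Set (MvPolynomial ι F))))
        ≤ Subalgebra.toSubmodule A * Submodule.span F (↑B₄ : Set (MvPolynomial ι F)) := by
  have hfgX := fg_adjoin_of_finite (B₀.finite_toSet) hint
  obtain ⟨B₄, hB₄⟩ := hfgX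
  refine ⟨B₄, ?_⟩
  intro x hx
  have hx2 : x ∈ Subalgebra.toSubmodule (Algebra.adjoin ↥A (↑B₀ : Set (MvPolynomial ι F))) := hx
  rw [← hB₄] at hx2
  have hx3 : x ∈ Submodule.restrictScalars F
      (Submodule.span ↥A (↑B₄ : Set (MvPolynomial ι F))) := hx2
  rwa [restrictScalars_span_eq] at hx3

end IntegralHelpers

section Norm


theorem exists_norm_poly [Finite G] (ρ : Representation F G (ι → F)) (K : Subgroup G)
    {f : MvPolynomial ι F} {e : ℕ} (hf : f.IsHomogeneous e)
    (hinv : ∀ k : K, polyAct ρ (k : G) f = f) :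
    ∃ q : Polynomial (MvPolynomial ι F), q.Monic ∧ Polynomial.eval f q = 0 ∧
      ∀ k : ℕ, q.coeff k ∈ invRing ρ ∧ (q.coeff k).IsHomogeneous (e * (K.index - k)) := by
  classical
  haveI : Fintype (G ⧸ K) := Fintype.ofFinite _
  have hwd : ∀ a b : G, (QuotientGroup.leftRel K) a b →
      (fun g : G => polyAct ρ g⁻¹ f) a = (fun g : G => polyAct ρ g⁻¹ f) b := by
    intro a b hab
    rw [QuotientGroup.leftRel_apply] at hab
    have h1 : polyAct ρ ((a⁻¹ * b)⁻¹) f = f := by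
      have := hinv (⟨a⁻¹ * b, hab⟩ : K)⁻¹
      simpa using this
    show polyAct ρ a⁻¹ f = polyAct ρ b⁻¹ f
    calc polyAct ρ a⁻¹ f = polyAct ρ a⁻¹ (polyAct ρ ((a⁻¹ * b)⁻¹) f) := by rw [h1]
      _ = polyAct ρ ((a⁻¹ * b)⁻¹ * a⁻¹) f := polyAct_polyAct ρ _ _ f
      _ = polyAct ρ b⁻¹ f := by congr 1; group
  set φ : G ⧸ K → MvPolynomial ι F :=
    fun c => Quotient.liftOn c (fun g : G => polyAct ρ g⁻¹ f) hwd with hφ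
  have hφmk : ∀ g : G, φ (QuotientGroup.mk g) = polyAct ρ g⁻¹ f := fun g => rfl
  have hφhom : ∀ c, (φ c).IsHomogeneous e := by
    intro c
    induction c using QuotientGroup.induction_on with
    | H g => rw [hφmk]; exact polyAct_isHomogeneous ρ g⁻¹ hf
  have hφact : ∀ (g' : G) (c : G ⧸ K), polyAct ρ g' (φ c) = φ (g'⁻¹ • c) := by
    intro g' c
    induction c using QuotientGroup.induction_on with
    | H g =>
      have hsm : (g'⁻¹ • (QuotientGroup.mk g : G ⧸ K)) = QuotientGroup.mk (g'⁻¹ * g) := rfl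
      rw [hφmk, polyAct_polyAct, hsm, hφmk, mul_inv_rev, inv_inv]
  set q : Polynomial (MvPolynomial ι F) :=
    ∏ c : G ⧸ K, (Polynomial.X - Polynomial.C (φ c)) with hq
  have hcard : Fintype.card (G ⧸ K) = K.index := by
    rw [K.index_eq_card, Nat.card_eq_fintype_card]
  have hmonic : q.Monic :=
    Polynomial.monic_prod_of_monic _ _ fun c _ => Polynomial.monic_X_sub_C _
  have hdeg : q.natDegree = K.index := by
    rw [hq, Polynomial.natDegree_prod_of_monic _ _ fun c _ => Polynomial.monic_X_sub_C _]
    simp [Polynomial.natDegree_X_sub_C, hcard]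
  have heval : Polynomial.eval f q = 0 := by
    rw [hq, Polynomial.eval_prod]
    apply Finset.prod_eq_zero (Finset.mem_univ (QuotientGroup.mk (1 : G) : G ⧸ K))
    rw [Polynomial.eval_sub, Polynomial.eval_X, Polynomial.eval_C, hφmk, inv_one, polyAct_one,
      sub_self]
  have hinvc : ∀ (g' : G) (k : ℕ), polyAct ρ g' (q.coeff k) = q.coeff k := by
    intro g' k
    have hmap : q.map ((polyAct ρ g' : MvPolynomial ι F →ₐ[F] MvPolynomial ι F) :
        MvPolynomial ι F →+* MvPolynomial ι F) = q := by
      rw [hq, Polynomial.map_prod]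
      have h2 : ∀ c : G ⧸ K,
          Polynomial.map ((polyAct ρ g' : MvPolynomial ι F →ₐ[F] MvPolynomial ι F) :
              MvPolynomial ι F →+* MvPolynomial ι F) (Polynomial.X - Polynomial.C (φ c))
            = Polynomial.X - Polynomial.C (φ (g'⁻¹ • c)) := by
        intro c
        rw [Polynomial.map_sub, Polynomial.map_X, Polynomial.map_C]
        congr 1
        rw [← hφact g' c]
        rfl
      rw [Finset.prod_congr rfl (fun c _ => h2 c)]
      exact Equiv.prod_comp (MulAction.toPerm g'⁻¹) fun c => Polynomial.X - Polynomial.C (φ c)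
    conv_rhs => rw [← hmap]
    rw [Polynomial.coeff_map]
    rfl
  refine ⟨q, hmonic, heval, fun k => ⟨mem_invRing.mpr fun g => hinvc g k, ?_⟩⟩
  by_cases hk : k ≤ K.index
  · have hq' : q = ∏ c : G ⧸ K, (Polynomial.X + Polynomial.C (-φ c)) := by
      rw [hq]; simp_rw [sub_eq_add_neg, ← Polynomial.C_neg]
    have hk' : k ≤ (Finset.univ : Finset (G ⧸ K)).card := by
      rwa [Finset.card_univ, hcard]
    rw [hq', Finset.prod_X_add_C_coeff _ _ hk']
    apply IsHomogeneous.sum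
    intro t ht
    have htc : t.card = K.index - k := by
      have := (Finset.mem_powersetCard.mp ht).2
      rwa [Finset.card_univ, hcard] at this
    have hp := IsHomogeneous.prod t (fun c => -φ c) (fun _ => e) (fun c _ => (hφhom c).neg)
    rw [Finset.sum_const, htc] at hp
    simpa [smul_eq_mul, mul_comm] using hp
  · push_neg at hk
    rw [Polynomial.coeff_eq_zero_of_natDegree_lt (by rwa [hdeg])]
    exact isHomogeneous_zero _ _ _

theorem isIntegral_adjC [Finite G] (ρ : Representation F G (ι → F)) (K : Subgroup G)
    {f : MvPolynomial ι F} {e : ℕ} (hf : f.IsHomogeneous e)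
    (hinv : ∀ k : K, polyAct ρ (k : G) f = f) {D : ℕ} (hD : e * K.index ≤ D) :
    IsIntegral ↥(adjC (invRing ρ) D) f := by
  obtain ⟨q, hm, he, hc⟩ := exists_norm_poly ρ K hf hinv
  set A := adjC (invRing ρ) D with hA
  have hmem : ∀ k, q.coeff k ∈ A := by
    intro k
    apply Algebra.subset_adjoin
    refine Set.mem_biUnion (show e * (K.index - k) ∈ Set.Iic D from
      le_trans (Nat.mul_le_mul_left _ (Nat.sub_le _ _)) hD) ?_
    exact Submodule.mem_inf.mpr ⟨(hc k).1, (hc k).2⟩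
  have hco : (↑q.coeffs : Set (MvPolynomial ι F)) ⊆ (A.toSubring : Set (MvPolynomial ι F)) := by
    intro x hx
    rcases Polynomial.mem_coeffs_iff.mp hx with ⟨n, hn, rfl⟩
    exact hmem n
  refine ⟨q.toSubring A.toSubring hco, (Polynomial.monic_toSubring _ _ _).mpr hm, ?_⟩
  rw [Polynomial.eval₂_eq_eval_map]
  have h1 : Polynomial.map (algebraMap ↥A (MvPolynomial ι F)) (q.toSubring A.toSubring hco)
      = Polynomial.map (A.toSubring.subtype) (q.toSubring A.toSubring hco) := rfl
  rw [h1, Polynomial.map_toSubring, he]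

end Norm

section AdjC

variable (S : Subalgebra F (MvPolynomial ι F))

theorem adjC_le (d : ℕ) : adjC S d ≤ S := by
  apply Algebra.adjoin_le
  refine Set.iUnion₂_subset fun i hi x hx => ?_
  exact (Submodule.mem_inf.mp hx).1

theorem adjC_mono_left {S' : Subalgebra F (MvPolynomial ι F)} (h : S ≤ S') (d : ℕ) :
    adjC S d ≤ adjC S' d := by
  apply Algebra.adjoin_mono
  refine Set.iUnion₂_mono fun i hi x hx => ?_
  exact Submodule.mem_inf.mpr ⟨h (Submodule.mem_inf.mp hx).1, (Submodule.mem_inf.mp hx).2⟩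

theorem U_sub_rtd (d : ℕ) :
    (⋃ i ∈ Set.Iic d, (subComp S i : Set (MvPolynomial ι F)))
      ⊆ (restrictTotalDegree ι F d : Set (MvPolynomial ι F)) := by
  intro x hx
  obtain ⟨i, hi, hxi⟩ := Set.mem_iUnion₂.mp hx
  have hh : x.IsHomogeneous i := (Submodule.mem_inf.mp hxi).2
  have hxd : x.totalDegree ≤ d := hh.totalDegree_le.trans hi
  show x ∈ restrictTotalDegree ι F d
  rw [mem_restrictTotalDegree]
  exact hxd

theorem span_U_fd (d : ℕ) :
    ∃ B₀ : Finset (MvPolynomial ι F),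
      Submodule.span F (↑B₀ : Set (MvPolynomial ι F))
        = Submodule.span F (⋃ i ∈ Set.Iic d, (subComp S i : Set (MvPolynomial ι F))) := by
  have hle : Submodule.span F (⋃ i ∈ Set.Iic d, (subComp S i : Set (MvPolynomial ι F)))
      ≤ restrictTotalDegree ι F d := Submodule.span_le.mpr (U_sub_rtd S d)
  haveI : FiniteDimensional F ↥(restrictTotalDegree ι F d) := inferInstance
  haveI : FiniteDimensional F
      ↥(Submodule.span F (⋃ i ∈ Set.Iic d, (subComp S i : Set (MvPolynomial ι F)))) :=
    Submodule.finiteDimensional_of_le hle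
  exact (Submodule.fg_iff_finiteDimensional _).mpr ‹_›

theorem adjC_fg (d : ℕ) : (adjC S d).FG := by
  obtain ⟨B₀, hB₀⟩ := span_U_fd S d
  refine ⟨B₀, le_antisymm ?_ ?_⟩
  · apply Algebra.adjoin_le
    intro x hx
    have h1 : x ∈ Submodule.span F (↑B₀ : Set (MvPolynomial ι F)) := Submodule.subset_span hx
    rw [hB₀] at h1
    have hle : Submodule.span F (⋃ i ∈ Set.Iic d, (subComp S i : Set (MvPolynomial ι F)))
        ≤ Subalgebra.toSubmodule (adjC S d) :=
      Submodule.span_le.mpr fun y hy => Algebra.subset_adjoin hy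
    exact hle h1
  · apply Algebra.adjoin_le
    intro x hx
    have h1 : x ∈ Submodule.span F (⋃ i ∈ Set.Iic d, (subComp S i : Set (MvPolynomial ι F))) :=
      Submodule.subset_span hx
    rw [← hB₀] at h1
    have hle : Submodule.span F (↑B₀ : Set (MvPolynomial ι F))
        ≤ Subalgebra.toSubmodule (Algebra.adjoin F (↑B₀ : Set (MvPolynomial ι F))) :=
      Submodule.span_le.mpr fun y hy => Algebra.subset_adjoin hy
    exact hle h1

theorem mem_iff (d : ℕ) (hfin : Module.Finite ↥S (MvPolynomial ι F)) :
    fgOver S (adjC S d) ↔ Module.Finite ↥(adjC S d) (MvPolynomial ι F) := by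
  constructor
  · rintro ⟨B, hBS, hle⟩
    exact finite_compose (adjC S d) S B.finite_toSet hle hfin
  · intro h
    exact extract (adjC S d) S (adjC_le S d) (adjC_fg S d) h

end AdjC

section Steps

theorem finite_adjC_inv [Finite G] (ρ : Representation F G (ι → F)) :
    Module.Finite ↥(adjC (invRing ρ) (Nat.card G)) (MvPolynomial ι F) := by
  apply finite_of_X_integral
  intro i
  refine isIntegral_adjC ρ (⊥ : Subgroup G) (isHomogeneous_X F i) ?_ ?_
  · intro k
    have hk1 : (k : G) = 1 := by
      have := k.2
      rwa [Subgroup.mem_bot] at this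
    rw [hk1, polyAct_one]
  · rw [one_mul, Subgroup.index_bot]

theorem step2 [Finite G] (ρ : Representation F G (ι → F)) (H : Subgroup G) (s : ℕ)
    (hfin : Module.Finite ↥(adjC (invRing (ρ.comp H.subtype)) s) (MvPolynomial ι F)) :
    Module.Finite ↥(adjC (invRing ρ) (H.index * s)) (MvPolynomial ι F) := by
  classical
  set SH := invRing (ρ.comp H.subtype) with hSH
  set A := adjC (invRing ρ) (H.index * s) with hA
  have hUint : ∀ x ∈ (⋃ i ∈ Set.Iic s, (subComp SH i : Set (MvPolynomial ι F))),
      IsIntegral ↥A x := by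
    intro x hx
    obtain ⟨i, hi, hxi⟩ := Set.mem_iUnion₂.mp hx
    have hxS : x ∈ SH := (Submodule.mem_inf.mp hxi).1
    have hxh : x.IsHomogeneous i := (Submodule.mem_inf.mp hxi).2
    have hinv : ∀ k : H, polyAct ρ (k : G) x = x := fun k => mem_invRing.mp hxS k
    refine isIntegral_adjC ρ H hxh hinv ?_
    calc i * H.index ≤ s * H.index := Nat.mul_le_mul_right _ hi
      _ = H.index * s := Nat.mul_comm _ _
  obtain ⟨B₀, hB₀⟩ := span_U_fd SH s
  have hB₀int : ∀ b ∈ B₀, IsIntegral ↥A b := by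
    intro b hb
    have hbspan : b ∈ Submodule.span F (↑B₀ : Set (MvPolynomial ι F)) := Submodule.subset_span hb
    rw [hB₀] at hbspan
    have hle : Submodule.span F (⋃ i ∈ Set.Iic s, (subComp SH i : Set (MvPolynomial ι F)))
        ≤ Subalgebra.toSubmodule
          ((integralClosure ↥A (MvPolynomial ι F)).restrictScalars F) :=
      Submodule.span_le.mpr fun x hx => hUint x hx
    exact hle hbspan
  obtain ⟨B₄, hB₄⟩ := adjoin_integral_le A B₀ hB₀int
  have key : Subalgebra.toSubmodule (adjC SH s)
      ≤ Subalgebra.toSubmodule A * Submodule.span F (↑B₄ : Set (MvPolynomial ι F)) := by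
    refine le_trans ?_ hB₄
    have h1 : adjC SH s
        ≤ Subalgebra.restrictScalars F
            (Algebra.adjoin ↥A (↑B₀ : Set (MvPolynomial ι F))) := by
      apply Algebra.adjoin_le
      intro x hx
      have hx' : x ∈ Submodule.span F (⋃ i ∈ Set.Iic s, (subComp SH i : Set (MvPolynomial ι F))) :=
        Submodule.subset_span hx
      rw [← hB₀] at hx'
      have hle : Submodule.span F (↑B₀ : Set (MvPolynomial ι F))
          ≤ Subalgebra.toSubmodule
            ((Algebra.adjoin ↥A (↑B₀ : Set (MvPolynomial ι F))).restrictScalars F) :=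
        Submodule.span_le.mpr fun y hy => Algebra.subset_adjoin hy
      exact hle hx'
    exact h1
  exact finite_compose A (adjC SH s) B₄.finite_toSet key hfin

end Steps

end SigmaAux
end SigmaAux

/-- For a subgroup `H` of the finite group `G` and a `G`-module `V`,
`σ(H,V) ≤ σ(G,V) ≤ [G:H] ⬝ σ(H,V)`. -/
theorem sigmaAlg_subgroup_le_and_le_index_mul {F : Type*} [Field F] {G : Type*} [Group G]
    [Finite G] (hG : (Nat.card G : F) ≠ 0) (H : Subgroup G)
    {ι : Type*} [Fintype ι] [DecidableEq ι] (ρ : Representation F G (ι → F)) :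
    sigmaAlg (invRing (ρ.comp H.subtype)) ≤ sigmaAlg (invRing ρ) ∧
      sigmaAlg (invRing ρ) ≤ H.index * sigmaAlg (invRing (ρ.comp H.subtype)) := by
  classical
  have hGH : invRing ρ ≤ invRing (ρ.comp H.subtype) := by
    intro p hp
    rw [SigmaAux.mem_invRing] at hp ⊢
    intro h
    exact hp ↑h
  have finG0 := SigmaAux.finite_adjC_inv ρ
  have finH0 := SigmaAux.finite_adjC_inv (ρ.comp H.subtype)
  have finSG : Module.Finite ↥(invRing ρ) (MvPolynomial ι F) :=
    SigmaAux.finite_mono _ _ (SigmaAux.adjC_le _ _) finG0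
  have finSH : Module.Finite ↥(invRing (ρ.comp H.subtype)) (MvPolynomial ι F) :=
    SigmaAux.finite_mono _ _ (SigmaAux.adjC_le _ _) finH0
  have hsetG : {d : ℕ | fgOver (invRing ρ) (SigmaAux.adjC (invRing ρ) d)}.Nonempty :=
    ⟨Nat.card G, (SigmaAux.mem_iff _ _ finSG).mpr finG0⟩
  have hsetH : {d : ℕ | fgOver (invRing (ρ.comp H.subtype))
      (SigmaAux.adjC (invRing (ρ.comp H.subtype)) d)}.Nonempty :=
    ⟨Nat.card ↥H, (SigmaAux.mem_iff _ _ finSH).mpr finH0⟩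
  constructor
  · rw [SigmaAux.sigmaAlg_eq, SigmaAux.sigmaAlg_eq]
    apply Nat.sInf_le
    have hdG := Nat.sInf_mem hsetG
    have h1 := (SigmaAux.mem_iff _ _ finSG).mp hdG
    have h2 := SigmaAux.finite_mono _ _ (SigmaAux.adjC_mono_left _ hGH _) h1
    exact (SigmaAux.mem_iff _ _ finSH).mpr h2
  · rw [SigmaAux.sigmaAlg_eq, SigmaAux.sigmaAlg_eq]
    apply Nat.sInf_le
    have hs := Nat.sInf_mem hsetH
    have h1 := (SigmaAux.mem_iff _ _ finSH).mp hs
    have h2 := SigmaAux.step2 ρ H _ h1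
    exact (SigmaAux.mem_iff _ _ finSG).mpr h2
end
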